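/- There exists a unique b* ∈ [0,∞) such that ψ''(x) < 0 for all x ∈ [0, b*) and ψ''(x) > 0 for all x ∈ (b*, ∞). Moreover, if μ(0) > 0 then b* > 0 and ψ''(b*) = 0, while if μ(0) ≤ 0 then b* = 0 and ψ''(x) > 0 for all x > 0. In particular, ψ is strictly concave on [0,b*] and strictly convex on [b*,∞), with b* < ∞. -/

import Mathlib

open Set Filter
open Topology

/-- existence and uniqueness of the inflection point b* of ψ, with
ψ'' < 0 before and ψ'' > 0 after; b* > 0 with ψ''(b*) = 0 if μ(0) > 0, and b* = 0
if μ(0) ≤ 0; ψ is strictly concave on [0,b*] and strictly convex on [b*,∞). -/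
theorem stmt_7
    (r c : ℝ) (hr : 0 < r) (hc : 0 < c)
    (μ σ : ℝ → ℝ) (hμ : ContDiff ℝ 1 μ) (hσ : ContDiff ℝ 1 σ)
    (hσpos : ∀ x ≥ (0:ℝ), 0 < σ x ^ 2)
    (hμderiv : ∀ x ≥ (0:ℝ), deriv μ x < r)
    (hμc : ∀ x ≥ c, μ x ≤ r * x - 1 / c)
    (ψ : ℝ → ℝ) (hψC : ContDiff ℝ 3 ψ)
    (hψ0 : ψ 0 = 0) (hψd0 : deriv ψ 0 = 1)
    (hψpos : ∀ x > (0:ℝ), 0 < ψ x)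
    (hψmono : MonotoneOn ψ (Ici (0:ℝ)))
    (hψODE : ∀ x ≥ (0:ℝ),
      (1/2) * σ x ^ 2 * deriv (deriv ψ) x + μ x * deriv ψ x - r * ψ x = 0) :
    ∃ bs : ℝ, 0 ≤ bs ∧
      (∀ x, 0 ≤ x → x < bs → deriv (deriv ψ) x < 0) ∧
      (∀ x, bs < x → 0 < deriv (deriv ψ) x) ∧
      (0 < μ 0 → 0 < bs ∧ deriv (deriv ψ) bs = 0) ∧
      (μ 0 ≤ 0 → bs = 0 ∧ ∀ x > (0:ℝ), 0 < deriv (deriv ψ) x) ∧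
      StrictConcaveOn ℝ (Icc 0 bs) ψ ∧
      StrictConvexOn ℝ (Ici bs) ψ ∧
      (∀ bs' : ℝ, 0 ≤ bs' →
        (∀ x, 0 ≤ x → x < bs' → deriv (deriv ψ) x < 0) →
        (∀ x, bs' < x → 0 < deriv (deriv ψ) x) → bs' = bs) := by
  -- regularity facts
  have hψd2 : ContDiff ℝ 2 (deriv ψ) :=
    ((contDiff_succ_iff_deriv (n := 2)).mp (by exact_mod_cast hψC)).2.2
  have hψdiff : Differentiable ℝ ψ := hψC.differentiable (by norm_num)
  have hψ'diff : Differentiable ℝ (deriv ψ) := hψd2.differentiable (by norm_num)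
  have hμdiff : Differentiable ℝ μ := hμ.differentiable (by norm_num)
  set g : ℝ → ℝ := fun x => r * ψ x - μ x * deriv ψ x with hgdef
  have hgcont : Continuous g :=
    (continuous_const.mul hψdiff.continuous).sub
      (hμdiff.continuous.mul hψ'diff.continuous)
  have hgderiv : ∀ x : ℝ, HasDerivAt g
      (r * deriv ψ x - (deriv μ x * deriv ψ x + μ x * deriv (deriv ψ) x)) x := by
    intro x
    exact ((hψdiff x).hasDerivAt.const_mul r).sub
      (((hμdiff x).hasDerivAt).mul (hψ'diff x).hasDerivAt)
  have hgψ : ∀ x ≥ (0:ℝ), σ x ^ 2 * deriv (deriv ψ) x = 2 * g x := by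
    intro x hx
    have h := hψODE x hx
    simp only [hgdef]
    linarith
  have hsign_pos : ∀ x ≥ (0:ℝ), 0 < g x → 0 < deriv (deriv ψ) x := by
    intro x hx h
    have h2 := hgψ x hx
    have h3 := hσpos x hx
    nlinarith
  have hsign_neg : ∀ x ≥ (0:ℝ), g x < 0 → deriv (deriv ψ) x < 0 := by
    intro x hx h
    have h2 := hgψ x hx
    have h3 := hσpos x hx
    nlinarith
  have hsign_zero : ∀ x ≥ (0:ℝ), g x = 0 → deriv (deriv ψ) x = 0 := by
    intro x hx h
    have h2 := hgψ x hx
    have h3 := hσpos x hx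
    have h4 : σ x ^ 2 * deriv (deriv ψ) x = 0 := by rw [h] at h2; linarith
    exact (mul_eq_zero.mp h4).resolve_left h3.ne'
  -- ψ' ≥ 0 on [0,∞)
  have hψ'nonneg : ∀ x ≥ (0:ℝ), 0 ≤ deriv ψ x := by
    intro x hx
    rcases hx.lt_or_eq with h | h
    · have ht := hasDerivAt_iff_tendsto_slope.mp (hψdiff x).hasDerivAt
      have ht' : Tendsto (slope ψ x) (𝓝[>] x) (𝓝 (deriv ψ x)) :=
        ht.mono_left (nhdsWithin_mono x fun y hy => ne_of_gt hy)
      refine ge_of_tendsto ht' ?_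
      filter_upwards [self_mem_nhdsWithin] with y hy
      have hxy : x < y := hy
      have hm : ψ x ≤ ψ y := hψmono (le_of_lt h) (le_of_lt (h.trans hxy)) hxy.le
      rw [slope_def_field]
      exact div_nonneg (by linarith) (by linarith)
    · rw [← h, hψd0]; norm_num
  have hψ'pos : ∀ x ≥ (0:ℝ), g x = 0 → 0 < deriv ψ x := by
    intro x hx h0
    rcases (hψ'nonneg x hx).lt_or_eq with h | h
    · exact h
    · exfalso
      have hψx : ψ x = 0 := by
        simp only [hgdef] at h0
        rw [← h] at h0
        have : r * ψ x = 0 := by linarith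
        exact (mul_eq_zero.mp this).resolve_left hr.ne'
      rcases hx.lt_or_eq with h1 | h1
      · exact absurd hψx (ne_of_gt (hψpos x h1))
      · rw [← h1, hψd0] at h; norm_num at h
  -- slope positivity near zeros of g
  have hslopeEv : ∀ x, 0 ≤ x → g x = 0 → ∀ᶠ y in 𝓝[≠] x, 0 < slope g x y := by
    intro x hx h0
    have hd : 0 < r * deriv ψ x - (deriv μ x * deriv ψ x + μ x * deriv (deriv ψ) x) := by
      rw [hsign_zero x hx h0]
      have h1 := hμderiv x hx
      have h2 := hψ'pos x hx h0
      nlinarith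
    exact (hasDerivAt_iff_tendsto_slope.mp (hgderiv x)).eventually (eventually_gt_nhds hd)
  have hleft : ∀ x, 0 ≤ x → g x = 0 → ∀ᶠ y in 𝓝[<] x, g y < 0 := by
    intro x hx h0
    have h1 := (hslopeEv x hx h0).filter_mono (nhdsWithin_mono x fun y hy => ne_of_lt hy)
    filter_upwards [h1, self_mem_nhdsWithin] with y h2 h3
    have h3' : y < x := h3
    rw [slope_def_field, h0, sub_zero] at h2
    rcases div_pos_iff.mp h2 with ⟨_, h4⟩ | ⟨h4, _⟩
    · linarith [sub_pos.mp h4]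
    · exact h4
  have hright : ∀ x, 0 ≤ x → g x = 0 → ∀ᶠ y in 𝓝[>] x, 0 < g y := by
    intro x hx h0
    have h1 := (hslopeEv x hx h0).filter_mono (nhdsWithin_mono x fun y hy => ne_of_gt hy)
    filter_upwards [h1, self_mem_nhdsWithin] with y h2 h3
    have h3' : x < y := h3
    rw [slope_def_field, h0, sub_zero] at h2
    rcases div_pos_iff.mp h2 with ⟨h4, _⟩ | ⟨_, h4⟩
    · exact h4
    · linarith [sub_neg.mp h4]
  -- picking points from one-sided eventualities
  have hpick_lt : ∀ (p : ℝ → Prop) (a x : ℝ), a < x → (∀ᶠ y in 𝓝[<] x, p y) →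
      ∃ y, a < y ∧ y < x ∧ p y := by
    intro p a x hax h
    have hm : Ioo a x ∈ 𝓝[<] x := Ioo_mem_nhdsLT_of_mem ⟨hax, le_rfl⟩
    rcases (h.and hm).exists with ⟨y, hy1, hy2⟩
    exact ⟨y, hy2.1, hy2.2, hy1⟩
  have hpick_gt : ∀ (p : ℝ → Prop) (a x : ℝ), a < x → (∀ᶠ y in 𝓝[>] a, p y) →
      ∃ y, a < y ∧ y < x ∧ p y := by
    intro p a x hax h
    have hm : Ioo a x ∈ 𝓝[>] a := Ioo_mem_nhdsGT_of_mem ⟨le_rfl, hax⟩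
    rcases (h.and hm).exists with ⟨y, hy1, hy2⟩
    exact ⟨y, hy2.1, hy2.2, hy1⟩
  -- persistence of positivity
  have hpersist0 : ∀ a x₁ : ℝ, 0 ≤ a → 0 < g a → a < x₁ → 0 < g x₁ := by
    intro a x₁ ha hga hax
    by_contra hle
    push_neg at hle
    set Z : Set ℝ := {x | x ∈ Icc a x₁ ∧ g x ≤ 0} with hZ
    have hZc : IsClosed Z := by
      have : Z = Icc a x₁ ∩ g ⁻¹' (Iic 0) := rfl
      rw [this]
      exact isClosed_Icc.inter (isClosed_Iic.preimage hgcont)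
    have hZne : Z.Nonempty := ⟨x₁, ⟨hax.le, le_rfl⟩, hle⟩
    have hZbdd : BddBelow Z := ⟨a, fun x hx => hx.1.1⟩
    set t := sInf Z with htdef
    have htZ : t ∈ Z := hZc.csInf_mem hZne hZbdd
    have hat : a < t := by
      rcases htZ.1.1.lt_or_eq with h | h
      · exact h
      · exfalso; rw [← h] at htZ; linarith [htZ.2]
    have htpos : ∀ y, a ≤ y → y < t → 0 < g y := by
      intro y h1 h2
      by_contra h3
      push_neg at h3
      have : y ∈ Z := ⟨⟨h1, h2.le.trans htZ.1.2⟩, h3⟩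
      exact absurd (csInf_le hZbdd this) (not_le.2 h2)
    have hgt0 : g t = 0 := by
      rcases htZ.2.lt_or_eq with h | h
      · exfalso
        have hev : ∀ᶠ y in 𝓝 t, g y < 0 := (hgcont.tendsto t).eventually (eventually_lt_nhds h)
        have hev' : ∀ᶠ y in 𝓝[<] t, g y < 0 := hev.filter_mono nhdsWithin_le_nhds
        rcases hpick_lt _ a t hat hev' with ⟨y, hy1, hy2, hy3⟩
        exact absurd (htpos y hy1.le hy2) (not_lt.2 hy3.le)
      · exact h
    have ht0 : (0:ℝ) ≤ t := ha.trans hat.le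
    rcases hpick_lt _ a t hat (hleft t ht0 hgt0) with ⟨y, hy1, hy2, hy3⟩
    exact absurd (htpos y hy1.le hy2) (not_lt.2 hy3.le)
  have hpersist : ∀ a, 0 ≤ a → 0 ≤ g a → ∀ x, a < x → 0 < g x := by
    intro a ha hga x hax
    rcases hga.lt_or_eq with h | h
    · exact hpersist0 a x ha h hax
    · rcases hpick_gt _ a x hax (hright a ha h.symm) with ⟨y, hy1, hy2, hy3⟩
      exact hpersist0 y x (ha.trans hy1.le) hy3 hy2
  -- existence of a nonnegativity point of g in [0,c]
  have hexist : ∃ x, x ∈ Icc (0:ℝ) c ∧ 0 ≤ g x := by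
    by_contra hcon
    push_neg at hcon
    have hneg : ∀ x ∈ Icc (0:ℝ) c, deriv (deriv ψ) x < 0 :=
      fun x hx => hsign_neg x hx.1 (hcon x hx)
    have hanti : StrictAntiOn (deriv ψ) (Icc 0 c) :=
      strictAntiOn_of_deriv_neg (convex_Icc 0 c) hψ'diff.continuous.continuousOn
        (by rw [interior_Icc]; intro x hx; exact hneg x ⟨hx.1.le, hx.2.le⟩)
    obtain ⟨ξ, hξ, hξeq⟩ := exists_deriv_eq_slope ψ hc
      hψdiff.continuous.continuousOn hψdiff.differentiableOn
    have h1 : deriv ψ c < deriv ψ ξ := hanti ⟨hξ.1.le, hξ.2.le⟩ ⟨hc.le, le_rfl⟩ hξ.2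
    have h2 : ψ c = c * deriv ψ ξ := by
      rw [hξeq, hψ0]
      rw [sub_zero, sub_zero, mul_div_cancel₀ _ hc.ne']
    have h3 := hμc c le_rfl
    have h4 := hψ'nonneg c hc.le
    have h5 := hcon c ⟨hc.le, le_rfl⟩
    simp only [hgdef] at h5
    have h6 : μ c * deriv ψ c ≤ (r * c - 1/c) * deriv ψ c :=
      mul_le_mul_of_nonneg_right h3 h4
    have h7 : r * c * deriv ψ c ≤ r * c * deriv ψ ξ :=
      mul_le_mul_of_nonneg_left h1.le (by positivity)
    have h8 : 0 ≤ deriv ψ c / c := div_nonneg h4 hc.le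
    have h9 : 0 < 1/c := by positivity
    nlinarith [mul_pos h9 (lt_of_le_of_lt h4 h1)]
  -- define bs
  set S : Set ℝ := {x | 0 ≤ x ∧ 0 ≤ g x} with hSdef
  have hScl : IsClosed S := by
    have : S = Ici 0 ∩ g ⁻¹' (Ici 0) := rfl
    rw [this]
    exact isClosed_Ici.inter (isClosed_Ici.preimage hgcont)
  obtain ⟨x₀, hx₀, hgx₀⟩ := hexist
  have hSne : S.Nonempty := ⟨x₀, hx₀.1, hgx₀⟩
  have hSbdd : BddBelow S := ⟨0, fun x hx => hx.1⟩
  set bs := sInf S with hbsdef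
  have hmem : bs ∈ S := hScl.csInf_mem hSne hSbdd
  have hbs0 : 0 ≤ bs := hmem.1
  have hgneg : ∀ x, 0 ≤ x → x < bs → g x < 0 := by
    intro x hx hxbs
    by_contra h
    push_neg at h
    exact absurd (csInf_le hSbdd ⟨hx, h⟩) (not_le.2 hxbs)
  have hlt : ∀ x, 0 ≤ x → x < bs → deriv (deriv ψ) x < 0 :=
    fun x hx hxbs => hsign_neg x hx (hgneg x hx hxbs)
  have hgpos : ∀ x, bs < x → 0 < g x := fun x hx => hpersist bs hbs0 hmem.2 x hx
  have hgt : ∀ x, bs < x → 0 < deriv (deriv ψ) x :=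
    fun x hx => hsign_pos x (hbs0.trans hx.le) (hgpos x hx)
  refine ⟨bs, hbs0, hlt, hgt, ?_, ?_, ?_, ?_, ?_⟩
  · -- μ 0 > 0
    intro hμ0
    have hg0 : g 0 < 0 := by
      simp only [hgdef, hψ0, hψd0]
      ring_nf
      linarith
    have hbspos : 0 < bs := by
      rcases hbs0.lt_or_eq with h | h
      · exact h
      · exfalso; rw [← h] at hmem; linarith [hmem.2]
    refine ⟨hbspos, ?_⟩
    have hgbs : g bs = 0 := by
      rcases hmem.2.lt_or_eq with h | h
      · exfalso
        have hev : ∀ᶠ y in 𝓝 bs, 0 < g y := (hgcont.tendsto bs).eventually (eventually_gt_nhds h)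
        have hev' : ∀ᶠ y in 𝓝[<] bs, 0 < g y := hev.filter_mono nhdsWithin_le_nhds
        rcases hpick_lt _ 0 bs hbspos hev' with ⟨y, hy1, hy2, hy3⟩
        exact absurd hy3 (not_lt.2 (hgneg y hy1.le hy2).le)
      · exact h.symm
    exact hsign_zero bs hbs0 hgbs
  · -- μ 0 ≤ 0
    intro hμ0
    have hg0 : 0 ≤ g 0 := by
      simp only [hgdef, hψ0, hψd0]
      ring_nf
      linarith
    have hbs_eq : bs = 0 := le_antisymm (csInf_le hSbdd ⟨le_rfl, hg0⟩) hbs0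
    exact ⟨hbs_eq, fun x hx => hgt x (by rw [hbs_eq]; exact hx)⟩
  · -- strict concavity on Icc 0 bs
    refine strictConcaveOn_of_deriv2_neg (convex_Icc 0 bs)
      hψdiff.continuous.continuousOn ?_
    intro x hx
    rw [interior_Icc] at hx
    show deriv (deriv ψ) x < 0
    exact hlt x hx.1.le hx.2
  · -- strict convexity on Ici bs
    refine strictConvexOn_of_deriv2_pos (convex_Ici bs)
      hψdiff.continuous.continuousOn ?_
    intro x hx
    rw [interior_Ici] at hx
    show 0 < deriv (deriv ψ) x
    exact hgt x hx
  · -- uniqueness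
    intro bs' h0 hneg' hpos'
    by_contra hne
    rcases lt_or_gt_of_ne hne with h | h
    · obtain ⟨y, hy1, hy2⟩ := exists_between h
      exact absurd (hpos' y hy1) (not_lt.2 (hlt y (h0.trans hy1.le) hy2).le)
    · obtain ⟨y, hy1, hy2⟩ := exists_between h
      exact absurd (hgt y hy1) (not_lt.2 (hneg' y (hbs0.trans hy1.le) hy2).le)
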